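/- Let (X,d) be a pointed metric space, let k ≥ 1 and ε > 0, and let f, g : X → [0,∞) be k-Lipschitz functions with f(x) + g(x) ≥ ε·|x| for all x ∈ X. Set h := f/(f+g) (defined wherever f+g > 0, in particular at every x with |x| > 0). Then: (i) for all x, y ∈ X with |x| ≥ |y| > 0, |h(x) − h(y)| ≤ 3k·d(x,y)/(ε·|y|); and (ii) the function x ↦ |x|·h(x) (defined to be 0 at the base point) is (3k/ε + 1)-Lipschitz on X. -/

import Mathlib

/-- if `f, g : X → [0,∞)` are `k`-Lipschitz (`k ≥ 1`) with
`f(x) + g(x) ≥ ε·|x|` and `h = f/(f+g)`, then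
(i) `|h(x) − h(y)| ≤ 3k·d(x,y)/(ε·|y|)` whenever `|x| ≥ |y| > 0`, and
(ii) `x ↦ |x|·h(x)` is `(3k/ε + 1)`-Lipschitz. -/
theorem stmt_18 {X : Type*} [MetricSpace X] (x₀ : X) (k ε : ℝ)
    (hk : 1 ≤ k) (hε : 0 < ε)
    (f g : X → ℝ) (hf0 : ∀ x, 0 ≤ f x) (hg0 : ∀ x, 0 ≤ g x)
    (hfLip : ∀ x y, |f x - f y| ≤ k * dist x y)
    (hgLip : ∀ x y, |g x - g y| ≤ k * dist x y)
    (hlow : ∀ x, ε * dist x x₀ ≤ f x + g x) :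
    (∀ x y : X, 0 < dist y x₀ → dist y x₀ ≤ dist x x₀ →
      |f x / (f x + g x) - f y / (f y + g y)| ≤ 3 * k * dist x y / (ε * dist y x₀)) ∧
    (∀ x y : X,
      |dist x x₀ * (f x / (f x + g x)) - dist y x₀ * (f y / (f y + g y))| ≤
        (3 * k / ε + 1) * dist x y) := by
  have hk0 : (0:ℝ) < k := lt_of_lt_of_le one_pos hk
  have key : ∀ x y : X, 0 < dist y x₀ → dist y x₀ ≤ dist x x₀ →
      |f x / (f x + g x) - f y / (f y + g y)| ≤ k * dist x y / (ε * dist y x₀) := by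
    intro x y hy hxy
    have hsy : 0 < f y + g y := lt_of_lt_of_le (mul_pos hε hy) (hlow y)
    have hsx : 0 < f x + g x := lt_of_lt_of_le (mul_pos hε (lt_of_lt_of_le hy hxy)) (hlow x)
    have hεy : 0 < ε * dist y x₀ := mul_pos hε hy
    have hεsy : ε * dist y x₀ ≤ f y + g y := hlow y
    rw [div_sub_div _ _ (ne_of_gt hsx) (ne_of_gt hsy), abs_div,
      abs_of_pos (mul_pos hsx hsy)]
    have hnum : |f x * (f y + g y) - (f x + g x) * f y| ≤ (f x + g x) * (k * dist x y) := by
      have h1 : f x * (f y + g y) - (f x + g x) * f y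
          = f x * (g y - g x) + g x * (f x - f y) := by ring
      rw [h1]
      calc |f x * (g y - g x) + g x * (f x - f y)|
          ≤ |f x * (g y - g x)| + |g x * (f x - f y)| := abs_add_le _ _
        _ = f x * |g y - g x| + g x * |f x - f y| := by
            rw [abs_mul, abs_mul, abs_of_nonneg (hf0 x), abs_of_nonneg (hg0 x)]
        _ ≤ f x * (k * dist x y) + g x * (k * dist x y) := by
            have h2 : |g y - g x| ≤ k * dist x y := by
              rw [dist_comm x y]; exact hgLip y x
            exact add_le_add (mul_le_mul_of_nonneg_left h2 (hf0 x))
              (mul_le_mul_of_nonneg_left (hfLip x y) (hg0 x))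
        _ = (f x + g x) * (k * dist x y) := by ring
    calc |f x * (f y + g y) - (f x + g x) * f y| / ((f x + g x) * (f y + g y))
        ≤ ((f x + g x) * (k * dist x y)) / ((f x + g x) * (f y + g y)) := by
          gcongr
      _ = (k * dist x y) / (f y + g y) := by
          rw [mul_div_mul_left _ _ (ne_of_gt hsx)]
      _ ≤ (k * dist x y) / (ε * dist y x₀) := by
          apply div_le_div_of_nonneg_left (mul_nonneg hk0.le dist_nonneg) hεy hεsy
  have hbd : ∀ x : X, 0 ≤ f x / (f x + g x) ∧ f x / (f x + g x) ≤ 1 := fun x =>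
    ⟨div_nonneg (hf0 x) (add_nonneg (hf0 x) (hg0 x)),
     div_le_one_of_le₀ (le_add_of_nonneg_right (hg0 x)) (add_nonneg (hf0 x) (hg0 x))⟩
  have main : ∀ x y : X, dist y x₀ ≤ dist x x₀ →
      |dist x x₀ * (f x / (f x + g x)) - dist y x₀ * (f y / (f y + g y))| ≤
        (3 * k / ε + 1) * dist x y := by
    intro x y hxy
    rcases eq_or_lt_of_le (dist_nonneg : (0:ℝ) ≤ dist y x₀) with hy | hy
    · have hyx₀ : y = x₀ := dist_eq_zero.mp hy.symm
      subst hyx₀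
      rw [dist_self, zero_mul, sub_zero]
      have h1 : |dist x y * (f x / (f x + g x))| ≤ dist x y := by
        rw [abs_of_nonneg (mul_nonneg dist_nonneg (hbd x).1)]
        calc dist x y * (f x / (f x + g x)) ≤ dist x y * 1 :=
              mul_le_mul_of_nonneg_left (hbd x).2 dist_nonneg
          _ = dist x y := mul_one _
      have h2 : (1:ℝ) * dist x y ≤ (3 * k / ε + 1) * dist x y := by
        apply mul_le_mul_of_nonneg_right _ dist_nonneg
        have : 0 ≤ 3 * k / ε := by positivity
        linarith
      calc |dist x y * (f x / (f x + g x))| ≤ dist x y := h1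
        _ = 1 * dist x y := (one_mul _).symm
        _ ≤ (3 * k / ε + 1) * dist x y := h2
    · have h1 := key x y hy hxy
      have heq : dist x x₀ * (f x / (f x + g x)) - dist y x₀ * (f y / (f y + g y))
          = (dist x x₀ - dist y x₀) * (f x / (f x + g x))
            + dist y x₀ * ((f x / (f x + g x)) - (f y / (f y + g y))) := by ring
      rw [heq]
      have h3 : |dist x x₀ - dist y x₀| ≤ dist x y := abs_dist_sub_le x y x₀
      calc |(dist x x₀ - dist y x₀) * (f x / (f x + g x))
            + dist y x₀ * ((f x / (f x + g x)) - (f y / (f y + g y)))|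
          ≤ |(dist x x₀ - dist y x₀) * (f x / (f x + g x))|
            + |dist y x₀ * ((f x / (f x + g x)) - (f y / (f y + g y)))| := abs_add_le _ _
        _ = |dist x x₀ - dist y x₀| * |f x / (f x + g x)|
            + dist y x₀ * |f x / (f x + g x) - f y / (f y + g y)| := by
            rw [abs_mul, abs_mul, abs_of_pos hy]
        _ ≤ dist x y * 1 + dist y x₀ * (k * dist x y / (ε * dist y x₀)) := by
            apply add_le_add
            · exact mul_le_mul h3 (by rw [abs_of_nonneg (hbd x).1]; exact (hbd x).2)
                (abs_nonneg _) dist_nonneg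
            · exact mul_le_mul_of_nonneg_left h1 dist_nonneg
        _ = dist x y + k * dist x y / ε := by
            rw [mul_one]
            congr 1
            field_simp
        _ ≤ (3 * k / ε + 1) * dist x y := by
            have h4 : k * dist x y / ε ≤ 3 * k * dist x y / ε := by
              apply div_le_div_of_nonneg_right _ hε.le
              nlinarith [dist_nonneg (x := x) (y := y)]
            have h5 : (3 * k / ε + 1) * dist x y = 3 * k * dist x y / ε + dist x y := by
              field_simp
            linarith
  refine ⟨fun x y hy hxy => (key x y hy hxy).trans ?_, fun x y => ?_⟩
  · apply div_le_div_of_nonneg_right _ (mul_pos hε hy).le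
    nlinarith [dist_nonneg (x := x) (y := y)]
  · rcases le_total (dist y x₀) (dist x x₀) with h | h
    · exact main x y h
    · rw [abs_sub_comm, dist_comm x y]
      exact main y x h
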